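/- If Z ~ EC*(φ₁, φ₂), then E(Z) = [(1−|φ₂|²)φ₁ + (1−|φ₁|²)φ₂] / (1 − |φ₁φ₂|²), valid for all φ₁, φ₂ in the open unit disc. -/

import Mathlib

set_option maxHeartbeats 1600000

open Real Complex intervalIntegral

/-- The density (with respect to arc length) of the `EC*(φ₁, φ₂)` distribution on
the unit circle. -/
noncomputable def ecDensity (φ₁ φ₂ z : ℂ) : ℝ :=
  (1 / (2 * Real.pi)) *
    (‖1 - φ₁ * (starRingEnd ℂ) φ₂‖ ^ 2 /
      (1 - ‖φ₁ * (starRingEnd ℂ) φ₂‖ ^ 2)) *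
    ((1 - ‖φ₁‖ ^ 2) / ‖z - φ₁‖ ^ 2) *
    ((1 - ‖φ₂‖ ^ 2) / ‖z - φ₂‖ ^ 2)

private lemma one_sub_mul_ne_zero' {u v : ℂ} (hu : ‖u‖ < 1)
    (hv : ‖v‖ ≤ 1) : (1 : ℂ) - u * v ≠ 0 := by
  intro h
  have h1 : u * v = 1 := by
    have := sub_eq_zero.mp h
    exact this.symm
  have h2 : ‖u‖ * ‖v‖ = 1 := by
    rw [← norm_mul, h1, norm_one]
  nlinarith [norm_nonneg u, norm_nonneg v,
    mul_le_of_le_one_right (norm_nonneg u) hv]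

private lemma one_sub_self_mul_ne {a b : ℂ} (ha : ‖a‖ < 1)
    (hb : ‖b‖ < 1) :
    (1 : ℂ) - a * b * (starRingEnd ℂ) a * (starRingEnd ℂ) b ≠ 0 := by
  have h1 : ‖a * b‖ < 1 := by
    rw [norm_mul]
    nlinarith [norm_nonneg a, norm_nonneg b,
      mul_le_of_le_one_right (norm_nonneg a) hb.le]
  have h2 : ‖(starRingEnd ℂ) a * (starRingEnd ℂ) b‖ ≤ 1 := by
    rw [norm_mul, Complex.norm_conj, Complex.norm_conj]
    nlinarith [norm_nonneg a, norm_nonneg b,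
      mul_le_of_le_one_right (norm_nonneg a) hb.le]
  have h3 := one_sub_mul_ne_zero' h1 h2
  intro h
  apply h3
  rw [← h]; ring

private lemma sq_abs'' (w : ℂ) :
    ((‖w‖ : ℝ) : ℂ) ^ 2 = w * (starRingEnd ℂ) w := by
  rw [← Complex.ofReal_pow, Complex.sq_norm, ← Complex.mul_conj]

/-- Auxiliary rational function whose circle integral gives the mean. -/
private noncomputable def Gfun (a b : ℂ) : ℂ → ℂ := fun z =>
  (1 - a * (starRingEnd ℂ) b) * (1 - (starRingEnd ℂ) a * b) * (1 - a * (starRingEnd ℂ) a) *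
      (1 - b * (starRingEnd ℂ) b) /
      ((1 - a * b * (starRingEnd ℂ) a * (starRingEnd ℂ) b) * (2 * (Real.pi : ℂ) * Complex.I)) *
      z ^ 2 /
    ((z - a) * (1 - (starRingEnd ℂ) a * z) * (z - b) * (1 - (starRingEnd ℂ) b * z))

private lemma ecDensity_smul_eq {a b z : ℂ} (ha : ‖a‖ < 1) (hb : ‖b‖ < 1)
    (hz : ‖z‖ = 1) :
    z * ((ecDensity a b z : ℝ) : ℂ) = (z * Complex.I) • Gfun a b z := by
  have hz0 : z ≠ 0 := by
    intro h; rw [h] at hz; simp at hz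
  have hza : z - a ≠ 0 := sub_ne_zero.2 fun h => by
    rw [h] at hz; exact absurd hz (ne_of_lt ha)
  have hzb : z - b ≠ 0 := sub_ne_zero.2 fun h => by
    rw [h] at hz; exact absurd hz (ne_of_lt hb)
  have h1a : (1 : ℂ) - (starRingEnd ℂ) a * z ≠ 0 :=
    one_sub_mul_ne_zero' (by rwa [Complex.norm_conj]) hz.le
  have h1b : (1 : ℂ) - (starRingEnd ℂ) b * z ≠ 0 :=
    one_sub_mul_ne_zero' (by rwa [Complex.norm_conj]) hz.le
  have hd : (1 : ℂ) - a * b * (starRingEnd ℂ) a * (starRingEnd ℂ) b ≠ 0 :=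
    one_sub_self_mul_ne ha hb
  have hπ : (Real.pi : ℂ) ≠ 0 := Complex.ofReal_ne_zero.mpr Real.pi_ne_zero
  have hI : Complex.I ≠ 0 := Complex.I_ne_zero
  have hconj : (starRingEnd ℂ) z = z⁻¹ := by
    have hn : Complex.normSq z = 1 := by rw [← Complex.sq_norm, hz]; norm_num
    rw [Complex.inv_def, hn]; simp
  unfold ecDensity Gfun
  push_cast
  simp only [sq_abs'']
  simp only [map_mul, map_sub, map_one, Complex.conj_conj, hconj, smul_eq_mul]
  field_simp [hz0, hza, hzb, h1a, h1b, hd, hπ, hI]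

private lemma circleIntegral_add' {f g : ℂ → ℂ} (hf : CircleIntegrable f 0 1)
    (hg : CircleIntegrable g 0 1) :
    (∮ z in C(0, 1), (f z + g z)) = (∮ z in C(0, 1), f z) + ∮ z in C(0, 1), g z := by
  simp only [circleIntegral, smul_add, intervalIntegral.integral_add hf.out hg.out]

private lemma split_ne {P Q R a b α β z : ℂ} (hza : z - a ≠ 0) (hzb : z - b ≠ 0)
    (h1 : (1 : ℂ) - α * z ≠ 0) (h2 : (1 : ℂ) - β * z ≠ 0) :
    (P * ((z - b) * ((1 - α * z) * (1 - β * z))) + Q * ((z - a) * ((1 - α * z) * (1 - β * z))) +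
        R * ((z - a) * (z - b))) / ((z - a) * (1 - α * z) * (z - b) * (1 - β * z)) =
      P * (z - a)⁻¹ + (Q * (z - b)⁻¹ + R / ((1 - α * z) * (1 - β * z))) := by
  rw [div_eq_iff (mul_ne_zero (mul_ne_zero (mul_ne_zero hza h1) hzb) h2)]
  have e1 : (z - a)⁻¹ * (z - a) = 1 := inv_mul_cancel₀ hza
  have e2 : (z - b)⁻¹ * (z - b) = 1 := inv_mul_cancel₀ hzb
  have e3 : ((1 - α * z) * (1 - β * z))⁻¹ * ((1 - α * z) * (1 - β * z)) = 1 :=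
    inv_mul_cancel₀ (mul_ne_zero h1 h2)
  rw [div_eq_mul_inv R]
  linear_combination (-(P * ((z - b) * ((1 - α * z) * (1 - β * z))))) * e1 +
    (-(Q * ((z - a) * ((1 - α * z) * (1 - β * z))))) * e2 + (-(R * ((z - a) * (z - b)))) * e3

private lemma split_eq {P Q R a α z : ℂ} (hza : z - a ≠ 0) (h1 : (1 : ℂ) - α * z ≠ 0) :
    (P * ((1 - α * z) * (1 - α * z)) + Q * ((z - a) * ((1 - α * z) * (1 - α * z))) +
        R * ((z - a) * (z - a))) / ((z - a) * (1 - α * z) * (z - a) * (1 - α * z)) =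
      P * ((z - a) * (z - a))⁻¹ + (Q * (z - a)⁻¹ + R / ((1 - α * z) * (1 - α * z))) := by
  field_simp
  ring

private lemma cancel_aux {u v w p c : ℂ} (hw : w ≠ 0) :
    u / (v * w) * p * w / c = u * p / (v * c) := by
  rw [div_mul_eq_mul_div, div_mul_eq_mul_div, div_div]
  rw [show v * w * c = w * (v * c) from by ring, show u * p * w = w * (u * p) from by ring,
    mul_div_mul_left _ _ hw]

/-- The first trigonometric moment (mean) of `Z ~ EC*(φ₁, φ₂)`, valid for all `φ₁, φ₂`
in the open unit disc. -/
theorem ecStar_first_trig_moment (φ₁ φ₂ : ℂ)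
    (hφ₁ : ‖φ₁‖ < 1) (hφ₂ : ‖φ₂‖ < 1) :
    ∫ θ in (-Real.pi)..Real.pi,
      Complex.exp (θ * Complex.I) *
        ((ecDensity φ₁ φ₂ (Complex.exp (θ * Complex.I)) : ℝ) : ℂ)
      = (((1 - ‖φ₂‖ ^ 2 : ℝ) : ℂ) * φ₁ + ((1 - ‖φ₁‖ ^ 2 : ℝ) : ℂ) * φ₂) /
          ((1 - ‖φ₁ * φ₂‖ ^ 2 : ℝ) : ℂ) := by
  have hstep : (∫ θ in (-Real.pi)..Real.pi,
      Complex.exp (θ * Complex.I) *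
        ((ecDensity φ₁ φ₂ (Complex.exp (θ * Complex.I)) : ℝ) : ℂ))
      = ∮ z in C(0, 1), Gfun φ₁ φ₂ z := by
    have hper : Function.Periodic (fun θ : ℝ => Complex.exp (θ * Complex.I) *
        ((ecDensity φ₁ φ₂ (Complex.exp (θ * Complex.I)) : ℝ) : ℂ)) (2 * Real.pi) := by
      intro θ
      have he : Complex.exp ((↑(θ + 2 * Real.pi)) * Complex.I)
          = Complex.exp ((θ : ℂ) * Complex.I) := by
        push_cast
        rw [add_mul, Complex.exp_add, Complex.exp_two_pi_mul_I, mul_one]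
      simp only [he]
    have h2 := hper.intervalIntegral_add_eq (-Real.pi) 0
    rw [zero_add] at h2
    have h3 : -Real.pi + 2 * Real.pi = Real.pi := by ring
    rw [h3] at h2
    rw [h2, circleIntegral]
    refine (intervalIntegral.integral_congr fun θ _ => ?_).symm
    rw [deriv_circleMap]
    have hc : circleMap 0 1 θ = Complex.exp (θ * Complex.I) := by simp [circleMap]
    rw [hc]
    exact (ecDensity_smul_eq hφ₁ hφ₂ (Complex.norm_exp_ofReal_mul_I θ)).symm
  rw [hstep]
  push_cast
  simp only [sq_abs'']
  simp only [map_mul]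
  have h2πI : (2 * (Real.pi : ℂ) * Complex.I) ≠ 0 := by
    simp [Real.pi_ne_zero, Complex.I_ne_zero, Complex.ofReal_ne_zero]
  have hd : (1 : ℂ) - φ₁ * φ₂ * (starRingEnd ℂ) φ₁ * (starRingEnd ℂ) φ₂ ≠ 0 :=
    one_sub_self_mul_ne hφ₁ hφ₂
  have hd' : (1 : ℂ) - φ₁ * φ₂ * ((starRingEnd ℂ) φ₁ * (starRingEnd ℂ) φ₂) ≠ 0 := by
    rw [← mul_assoc]; exact hd
  have hαa : (1 : ℂ) - (starRingEnd ℂ) φ₁ * φ₁ ≠ 0 :=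
    one_sub_mul_ne_zero' (by rwa [Complex.norm_conj]) hφ₁.le
  have hβa : (1 : ℂ) - (starRingEnd ℂ) φ₂ * φ₁ ≠ 0 :=
    one_sub_mul_ne_zero' (by rwa [Complex.norm_conj]) hφ₁.le
  have hαb : (1 : ℂ) - (starRingEnd ℂ) φ₁ * φ₂ ≠ 0 :=
    one_sub_mul_ne_zero' (by rwa [Complex.norm_conj]) hφ₂.le
  have hβb : (1 : ℂ) - (starRingEnd ℂ) φ₂ * φ₂ ≠ 0 :=
    one_sub_mul_ne_zero' (by rwa [Complex.norm_conj]) hφ₂.le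
  have hmem₁ : φ₁ ∈ Metric.ball (0 : ℂ) 1 :=
    mem_ball_zero_iff.mpr (by assumption)
  have hmem₂ : φ₂ ∈ Metric.ball (0 : ℂ) 1 :=
    mem_ball_zero_iff.mpr (by assumption)
  have hsphere : ∀ {z : ℂ}, z ∈ Metric.sphere (0 : ℂ) 1 → ‖z‖ = 1 := by
    intro z hz
    simpa using mem_sphere_zero_iff_norm.mp hz
  have hsub_ne : ∀ {w z : ℂ}, ‖w‖ < 1 → ‖z‖ = 1 → z - w ≠ 0 := by
    intro w z hw hz
    exact sub_ne_zero.2 fun h => by rw [h] at hz; exact absurd hz (ne_of_lt hw)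
  rcases eq_or_ne φ₁ φ₂ with heq | hab
  · -- equal case
    subst heq
    set K : ℂ := (1 - φ₁ * (starRingEnd ℂ) φ₁) * (1 - (starRingEnd ℂ) φ₁ * φ₁) *
        (1 - φ₁ * (starRingEnd ℂ) φ₁) * (1 - φ₁ * (starRingEnd ℂ) φ₁) /
        ((1 - φ₁ * φ₁ * (starRingEnd ℂ) φ₁ * (starRingEnd ℂ) φ₁) *
          (2 * (Real.pi : ℂ) * Complex.I)) with hKeq
    set c : ℂ := (1 - (starRingEnd ℂ) φ₁ * φ₁) ^ 3 with hceq
    have hc : c ≠ 0 := by rw [hceq]; exact pow_ne_zero 3 hαa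
    set A2 : ℂ := K * φ₁ ^ 2 * (1 - (starRingEnd ℂ) φ₁ * φ₁) with hA2
    set B2 : ℂ := 2 * K * φ₁ with hB2
    set C2 : ℂ := -(2 * K * φ₁ * ((starRingEnd ℂ) φ₁) ^ 2) with hC2
    set D2 : ℂ := K * (1 - (starRingEnd ℂ) φ₁ * φ₁) ^ 3 -
        K * φ₁ ^ 2 * ((starRingEnd ℂ) φ₁) ^ 2 * (1 - (starRingEnd ℂ) φ₁ * φ₁) +
        4 * K * φ₁ * (starRingEnd ℂ) φ₁ -
        2 * K * φ₁ ^ 2 * ((starRingEnd ℂ) φ₁) ^ 2 with hD2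
    have hpoly : ∀ z : ℂ, A2 * ((1 - (starRingEnd ℂ) φ₁ * z) * (1 - (starRingEnd ℂ) φ₁ * z)) +
        B2 * ((z - φ₁) * ((1 - (starRingEnd ℂ) φ₁ * z) * (1 - (starRingEnd ℂ) φ₁ * z))) +
        (C2 * z + D2) * ((z - φ₁) * (z - φ₁)) = K * z ^ 2 * c := by
      intro z
      simp only [hA2, hB2, hC2, hD2, hceq]
      ring
    have hdiff3 : ∀ z : ℂ, ‖z‖ ≤ 1 →
        DifferentiableAt ℂ (fun z => (C2 / c * z + D2 / c) /
          ((1 - (starRingEnd ℂ) φ₁ * z) * (1 - (starRingEnd ℂ) φ₁ * z))) z := by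
      intro z hz
      refine DifferentiableAt.div (by fun_prop) (by fun_prop) ?_
      exact mul_ne_zero (one_sub_mul_ne_zero' (by rwa [Complex.norm_conj]) hz)
        (one_sub_mul_ne_zero' (by rwa [Complex.norm_conj]) hz)
    have hEq : Set.EqOn (Gfun φ₁ φ₁)
        (fun z => A2 / c * ((z - φ₁) * (z - φ₁))⁻¹ + (B2 / c * (z - φ₁)⁻¹ +
          (C2 / c * z + D2 / c) / ((1 - (starRingEnd ℂ) φ₁ * z) * (1 - (starRingEnd ℂ) φ₁ * z))))
        (Metric.sphere (0 : ℂ) 1) := by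
      intro z hz
      have hz' : ‖z‖ = 1 := hsphere hz
      have hza : z - φ₁ ≠ 0 := hsub_ne hφ₁ hz'
      have h1az : (1 : ℂ) - (starRingEnd ℂ) φ₁ * z ≠ 0 :=
        one_sub_mul_ne_zero' (by rwa [Complex.norm_conj]) hz'.le
      have h5 : Gfun φ₁ φ₁ z = K * z ^ 2 /
          ((z - φ₁) * (1 - (starRingEnd ℂ) φ₁ * z) * (z - φ₁) * (1 - (starRingEnd ℂ) φ₁ * z)) := by
        simp only [Gfun, hKeq]
      dsimp only
      rw [h5, ← split_eq hza h1az]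
      congr 1
      have h6 : A2 / c * ((1 - (starRingEnd ℂ) φ₁ * z) * (1 - (starRingEnd ℂ) φ₁ * z)) +
          B2 / c * ((z - φ₁) * ((1 - (starRingEnd ℂ) φ₁ * z) * (1 - (starRingEnd ℂ) φ₁ * z))) +
          (C2 / c * z + D2 / c) * ((z - φ₁) * (z - φ₁)) =
          (A2 * ((1 - (starRingEnd ℂ) φ₁ * z) * (1 - (starRingEnd ℂ) φ₁ * z)) +
            B2 * ((z - φ₁) * ((1 - (starRingEnd ℂ) φ₁ * z) * (1 - (starRingEnd ℂ) φ₁ * z))) +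
            (C2 * z + D2) * ((z - φ₁) * (z - φ₁))) / c := by
        ring
      rw [h6, hpoly z, mul_div_cancel_right₀ _ hc]
    rw [circleIntegral.integral_congr zero_le_one hEq]
    have hzpowinv : (fun z : ℂ => A2 / c * ((z - φ₁) * (z - φ₁))⁻¹)
        = fun z : ℂ => A2 / c * (z - φ₁) ^ (-2 : ℤ) := by
      funext z
      rw [zpow_neg, show ((2 : ℤ) : ℤ) = ((2 : ℕ) : ℤ) from rfl, zpow_natCast, sq]
    have hint1 : CircleIntegrable (fun z => A2 / c * ((z - φ₁) * (z - φ₁))⁻¹) 0 1 := by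
      refine ContinuousOn.circleIntegrable zero_le_one ?_
      refine continuousOn_const.mul (ContinuousOn.inv₀
        (((continuous_id.sub continuous_const).mul
          (continuous_id.sub continuous_const)).continuousOn) fun z hz =>
          mul_ne_zero (hsub_ne hφ₁ (hsphere hz)) (hsub_ne hφ₁ (hsphere hz)))
    have hint2 : CircleIntegrable (fun z => B2 / c * (z - φ₁)⁻¹) 0 1 := by
      refine ContinuousOn.circleIntegrable zero_le_one ?_
      exact continuousOn_const.mul (((continuous_id.sub continuous_const).continuousOn).inv₀
        fun z hz => hsub_ne hφ₁ (hsphere hz))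
    have hint3 : CircleIntegrable (fun z => (C2 / c * z + D2 / c) /
        ((1 - (starRingEnd ℂ) φ₁ * z) * (1 - (starRingEnd ℂ) φ₁ * z))) 0 1 := by
      refine ContinuousOn.circleIntegrable zero_le_one fun z hz => ?_
      exact (hdiff3 z (hsphere hz).le).continuousAt.continuousWithinAt
    have hint23 : CircleIntegrable (fun z => B2 / c * (z - φ₁)⁻¹ + (C2 / c * z + D2 / c) /
        ((1 - (starRingEnd ℂ) φ₁ * z) * (1 - (starRingEnd ℂ) φ₁ * z))) 0 1 := hint2.add hint3
    rw [circleIntegral_add' hint1 hint23, circleIntegral_add' hint2 hint3]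
    have hi1 : (∮ z in C(0, 1), A2 / c * ((z - φ₁) * (z - φ₁))⁻¹) = 0 := by
      rw [hzpowinv]
      have h := circleIntegral.integral_smul (A2 / c) (fun z => (z - φ₁) ^ (-2 : ℤ)) 0 1
      simp only [smul_eq_mul] at h
      rw [h, circleIntegral.integral_sub_zpow_of_ne (by decide) 0 φ₁ 1, mul_zero]
    have hi2 : (∮ z in C(0, 1), B2 / c * (z - φ₁)⁻¹) = B2 / c * (2 * Real.pi * Complex.I) := by
      have h := circleIntegral.integral_smul (B2 / c) (fun z => (z - φ₁)⁻¹) 0 1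
      simp only [smul_eq_mul] at h
      rw [h, circleIntegral.integral_sub_inv_of_mem_ball hmem₁]
    have hi3 : (∮ z in C(0, 1), (C2 / c * z + D2 / c) /
        ((1 - (starRingEnd ℂ) φ₁ * z) * (1 - (starRingEnd ℂ) φ₁ * z))) = 0 := by
      refine circleIntegral_eq_zero_of_differentiable_on_off_countable zero_le_one
        Set.countable_empty (fun z hz => ?_) (fun z hz => ?_)
      · have hz' : ‖z‖ ≤ 1 := by
          simpa using mem_closedBall_zero_iff.mp hz
        exact (hdiff3 z hz').continuousAt.continuousWithinAt
      · have hz' : ‖z‖ ≤ 1 := by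
          have := mem_ball_zero_iff.mp hz.1
          exact this.le
        exact hdiff3 z hz'
    rw [hi1, hi2, hi3]
    have e1 : (0 : ℂ) + (B2 / c * (2 * Real.pi * Complex.I) + 0)
        = K * (2 * φ₁) * (2 * (Real.pi : ℂ) * Complex.I) / c := by
      rw [hB2]; ring
    rw [e1, hKeq, cancel_aux h2πI, div_eq_div_iff (mul_ne_zero hd hc) hd', hceq]
    ring
  · -- distinct case
    have hsub : φ₁ - φ₂ ≠ 0 := sub_ne_zero.2 hab
    set K : ℂ := (1 - φ₁ * (starRingEnd ℂ) φ₂) * (1 - (starRingEnd ℂ) φ₁ * φ₂) *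
        (1 - φ₁ * (starRingEnd ℂ) φ₁) * (1 - φ₂ * (starRingEnd ℂ) φ₂) /
        ((1 - φ₁ * φ₂ * (starRingEnd ℂ) φ₁ * (starRingEnd ℂ) φ₂) *
          (2 * (Real.pi : ℂ) * Complex.I)) with hKeq
    set c : ℂ := (1 - (starRingEnd ℂ) φ₁ * φ₁) * (1 - (starRingEnd ℂ) φ₂ * φ₁) *
        (1 - (starRingEnd ℂ) φ₁ * φ₂) * (1 - (starRingEnd ℂ) φ₂ * φ₂) * (φ₁ - φ₂) with hceq
    have hc : c ≠ 0 := by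
      rw [hceq]
      exact mul_ne_zero (mul_ne_zero (mul_ne_zero (mul_ne_zero hαa hβa) hαb) hβb) hsub
    set A : ℂ := K * φ₁ ^ 2 * ((1 - (starRingEnd ℂ) φ₁ * φ₂) * (1 - (starRingEnd ℂ) φ₂ * φ₂))
      with hA
    set B : ℂ := -(K * φ₂ ^ 2 * ((1 - (starRingEnd ℂ) φ₁ * φ₁) * (1 - (starRingEnd ℂ) φ₂ * φ₁)))
      with hB
    set C : ℂ := -((starRingEnd ℂ) φ₁ * (starRingEnd ℂ) φ₂) * (A + B) with hC
    set D : ℂ := K * c + ((starRingEnd ℂ) φ₁ + (starRingEnd ℂ) φ₂) * (A + B) -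
        (starRingEnd ℂ) φ₁ * (starRingEnd ℂ) φ₂ * (φ₁ * A + φ₂ * B) with hD
    have hpoly : ∀ z : ℂ,
        A * ((z - φ₂) * ((1 - (starRingEnd ℂ) φ₁ * z) * (1 - (starRingEnd ℂ) φ₂ * z))) +
        B * ((z - φ₁) * ((1 - (starRingEnd ℂ) φ₁ * z) * (1 - (starRingEnd ℂ) φ₂ * z))) +
        (C * z + D) * ((z - φ₁) * (z - φ₂)) = K * z ^ 2 * c := by
      intro z
      simp only [hC, hD, hA, hB, hceq]
      ring
    have hdiff3 : ∀ z : ℂ, ‖z‖ ≤ 1 →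
        DifferentiableAt ℂ (fun z => (C / c * z + D / c) /
          ((1 - (starRingEnd ℂ) φ₁ * z) * (1 - (starRingEnd ℂ) φ₂ * z))) z := by
      intro z hz
      refine DifferentiableAt.div (by fun_prop) (by fun_prop) ?_
      exact mul_ne_zero (one_sub_mul_ne_zero' (by rwa [Complex.norm_conj]) hz)
        (one_sub_mul_ne_zero' (by rwa [Complex.norm_conj]) hz)
    have hEq : Set.EqOn (Gfun φ₁ φ₂)
        (fun z => A / c * (z - φ₁)⁻¹ + (B / c * (z - φ₂)⁻¹ +
          (C / c * z + D / c) / ((1 - (starRingEnd ℂ) φ₁ * z) * (1 - (starRingEnd ℂ) φ₂ * z))))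
        (Metric.sphere (0 : ℂ) 1) := by
      intro z hz
      have hz' : ‖z‖ = 1 := hsphere hz
      have hza : z - φ₁ ≠ 0 := hsub_ne hφ₁ hz'
      have hzb : z - φ₂ ≠ 0 := hsub_ne hφ₂ hz'
      have h1az : (1 : ℂ) - (starRingEnd ℂ) φ₁ * z ≠ 0 :=
        one_sub_mul_ne_zero' (by rwa [Complex.norm_conj]) hz'.le
      have h1bz : (1 : ℂ) - (starRingEnd ℂ) φ₂ * z ≠ 0 :=
        one_sub_mul_ne_zero' (by rwa [Complex.norm_conj]) hz'.le
      have h5 : Gfun φ₁ φ₂ z = K * z ^ 2 /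
          ((z - φ₁) * (1 - (starRingEnd ℂ) φ₁ * z) * (z - φ₂) * (1 - (starRingEnd ℂ) φ₂ * z)) := by
        simp only [Gfun, hKeq]
      dsimp only
      rw [h5, ← split_ne hza hzb h1az h1bz]
      congr 1
      have h6 : A / c * ((z - φ₂) * ((1 - (starRingEnd ℂ) φ₁ * z) * (1 - (starRingEnd ℂ) φ₂ * z))) +
          B / c * ((z - φ₁) * ((1 - (starRingEnd ℂ) φ₁ * z) * (1 - (starRingEnd ℂ) φ₂ * z))) +
          (C / c * z + D / c) * ((z - φ₁) * (z - φ₂)) =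
          (A * ((z - φ₂) * ((1 - (starRingEnd ℂ) φ₁ * z) * (1 - (starRingEnd ℂ) φ₂ * z))) +
            B * ((z - φ₁) * ((1 - (starRingEnd ℂ) φ₁ * z) * (1 - (starRingEnd ℂ) φ₂ * z))) +
            (C * z + D) * ((z - φ₁) * (z - φ₂))) / c := by
        ring
      rw [h6, hpoly z, mul_div_cancel_right₀ _ hc]
    rw [circleIntegral.integral_congr zero_le_one hEq]
    have hint1 : CircleIntegrable (fun z => A / c * (z - φ₁)⁻¹) 0 1 := by
      refine ContinuousOn.circleIntegrable zero_le_one ?_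
      exact continuousOn_const.mul (((continuous_id.sub continuous_const).continuousOn).inv₀
        fun z hz => hsub_ne hφ₁ (hsphere hz))
    have hint2 : CircleIntegrable (fun z => B / c * (z - φ₂)⁻¹) 0 1 := by
      refine ContinuousOn.circleIntegrable zero_le_one ?_
      exact continuousOn_const.mul (((continuous_id.sub continuous_const).continuousOn).inv₀
        fun z hz => hsub_ne hφ₂ (hsphere hz))
    have hint3 : CircleIntegrable (fun z => (C / c * z + D / c) /
        ((1 - (starRingEnd ℂ) φ₁ * z) * (1 - (starRingEnd ℂ) φ₂ * z))) 0 1 := by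
      refine ContinuousOn.circleIntegrable zero_le_one fun z hz => ?_
      exact (hdiff3 z (hsphere hz).le).continuousAt.continuousWithinAt
    have hint23 : CircleIntegrable (fun z => B / c * (z - φ₂)⁻¹ + (C / c * z + D / c) /
        ((1 - (starRingEnd ℂ) φ₁ * z) * (1 - (starRingEnd ℂ) φ₂ * z))) 0 1 := hint2.add hint3
    rw [circleIntegral_add' hint1 hint23, circleIntegral_add' hint2 hint3]
    have hi1 : (∮ z in C(0, 1), A / c * (z - φ₁)⁻¹) = A / c * (2 * Real.pi * Complex.I) := by
      have h := circleIntegral.integral_smul (A / c) (fun z => (z - φ₁)⁻¹) 0 1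
      simp only [smul_eq_mul] at h
      rw [h, circleIntegral.integral_sub_inv_of_mem_ball hmem₁]
    have hi2 : (∮ z in C(0, 1), B / c * (z - φ₂)⁻¹) = B / c * (2 * Real.pi * Complex.I) := by
      have h := circleIntegral.integral_smul (B / c) (fun z => (z - φ₂)⁻¹) 0 1
      simp only [smul_eq_mul] at h
      rw [h, circleIntegral.integral_sub_inv_of_mem_ball hmem₂]
    have hi3 : (∮ z in C(0, 1), (C / c * z + D / c) /
        ((1 - (starRingEnd ℂ) φ₁ * z) * (1 - (starRingEnd ℂ) φ₂ * z))) = 0 := by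
      refine circleIntegral_eq_zero_of_differentiable_on_off_countable zero_le_one
        Set.countable_empty (fun z hz => ?_) (fun z hz => ?_)
      · have hz' : ‖z‖ ≤ 1 := by
          simpa using mem_closedBall_zero_iff.mp hz
        exact (hdiff3 z hz').continuousAt.continuousWithinAt
      · have hz' : ‖z‖ ≤ 1 := by
          have := mem_ball_zero_iff.mp hz.1
          exact this.le
        exact hdiff3 z hz'
    rw [hi1, hi2, hi3]
    have e1 : A / c * (2 * Real.pi * Complex.I) + (B / c * (2 * Real.pi * Complex.I) + 0)
        = K * (φ₁ ^ 2 * ((1 - (starRingEnd ℂ) φ₁ * φ₂) * (1 - (starRingEnd ℂ) φ₂ * φ₂)) -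
            φ₂ ^ 2 * ((1 - (starRingEnd ℂ) φ₁ * φ₁) * (1 - (starRingEnd ℂ) φ₂ * φ₁))) *
          (2 * (Real.pi : ℂ) * Complex.I) / c := by
      rw [hA, hB]; ring
    rw [e1, hKeq, cancel_aux h2πI, div_eq_div_iff (mul_ne_zero hd hc) hd', hceq]
    ring
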